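/- (Example, value function.) Let a > 0, b ≠ 0 be real numbers and T > 0, and set x₁ = (1 − e^{−aT})|b|/a. For the scalar system dx/dt = a x + b u, for every ξ ∈ [−x₁, x₁], the value function of the sparse optimal control problem satisfies V₀(ξ) = −(1/a) log(1 − a|ξ|/|b|), where V₀(ξ) = inf{‖u‖₀ : u ∈ U(ξ)} (in particular V₀(0) = 0). -/

import Mathlib

open MeasureTheory

noncomputable section

/-- A scalar control: measurable with `|u t| ≤ 1` a.e. on `[0, T]`. -/
def IsControl (T : ℝ) (u : ℝ → ℝ) : Prop :=
  Measurable u ∧ ∀ᵐ t ∂(volume.restrict (Set.Icc (0:ℝ) T)), |u t| ≤ 1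

/-- `∫₀ᵀ e^{−as} b u(s) ds` for the scalar system `dx/dt = a x + b u`. -/
def steer (a b T : ℝ) (u : ℝ → ℝ) : ℝ :=
  ∫ s in Set.Icc (0:ℝ) T, Real.exp (-(a * s)) * b * u s

/-- The reachable set `R(T)` for the scalar system. -/
def ReachSet (a b T : ℝ) : Set ℝ :=
  {x | ∃ u, IsControl T u ∧ x = steer a b T u}

/-- Admissible controls for initial state `ξ`: `ξ = −∫₀ᵀ e^{−as} b u(s) ds`. -/
def Adm (a b T : ℝ) (ξ : ℝ) : Set (ℝ → ℝ) :=
  {u | IsControl T u ∧ ξ = -(steer a b T u)}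

/-- The support of `u`: closure of `{t ∈ [0,T] : u t ≠ 0}`. -/
def sparseSupp (T : ℝ) (u : ℝ → ℝ) : Set ℝ :=
  closure {t ∈ Set.Icc (0:ℝ) T | u t ≠ 0}

/-- `L⁰` "norm": Lebesgue measure of the support. -/
def L0norm (T : ℝ) (u : ℝ → ℝ) : ℝ := (volume (sparseSupp T u)).toReal

/-- Value function of the sparse optimal control problem. -/
def V0 (a b T : ℝ) (ξ : ℝ) : ℝ := sInf (L0norm T '' Adm a b T ξ)

lemma expInt (a : ℝ) (ha : 0 < a) (m : ℝ) (hm : 0 ≤ m) :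
    ∫ s in Set.Icc (0:ℝ) m, Real.exp (-(a*s)) = (1 - Real.exp (-(a*m)))/a := by
  have hd : ∀ x ∈ Set.uIcc (0:ℝ) m, HasDerivAt (fun x => -(1/a) * Real.exp (-(a*x)))
      (Real.exp (-(a*x))) x := by
    intro x _
    have h1 : HasDerivAt (fun x : ℝ => -(a*x)) (-a) x := by
      simpa using ((hasDerivAt_id x).const_mul (-a))
    have h2 := (h1.exp).const_mul (-(1/a))
    refine h2.congr_deriv ?_
    linear_combination (Real.exp (-(a*x))) * mul_inv_cancel₀ (ne_of_gt ha)
  have hi : IntervalIntegrable (fun x => Real.exp (-(a*x))) volume 0 m :=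
    (Continuous.intervalIntegrable (by continuity) 0 m)
  have := intervalIntegral.integral_eq_sub_of_hasDerivAt hd hi
  rw [MeasureTheory.integral_Icc_eq_integral_Ioc, ← intervalIntegral.integral_of_le hm, this]
  have ha' : a ≠ 0 := ne_of_gt ha
  field_simp
  rw [mul_zero, neg_zero, Real.exp_zero]; ring

lemma bathtub (a T : ℝ) (ha : 0 < a) (hT : 0 < T) (S : Set ℝ) (hS : MeasurableSet S)
    (hsub : S ⊆ Set.Icc 0 T) :
    ∫ s in S, Real.exp (-(a*s)) ≤ (1 - Real.exp (-(a * (volume S).toReal)))/a := by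
  set m : ℝ := (volume S).toReal with hm
  have hfin : volume S ≠ ⊤ :=
    ne_top_of_le_ne_top (by simp [Real.volume_Icc]) (measure_mono hsub)
  have hm0 : 0 ≤ m := ENNReal.toReal_nonneg
  set I : Set ℝ := Set.Icc 0 m with hI
  have hImeas : MeasurableSet I := measurableSet_Icc
  have hvolI : volume I = volume S := by
    rw [hI, Real.volume_Icc, sub_zero, hm, ENNReal.ofReal_toReal hfin]
  -- measure of differences agree
  have hsplit1 : volume (S ∩ I) + volume (S \ I) = volume S := measure_inter_add_diff S hImeas
  have hsplit2 : volume (I ∩ S) + volume (I \ S) = volume I := measure_inter_add_diff I hS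
  have hinter : volume (S ∩ I) ≠ ⊤ := ne_top_of_le_ne_top hfin (measure_mono Set.inter_subset_left)
  have hdiffeq : volume (S \ I) = volume (I \ S) := by
    have : volume (S ∩ I) + volume (S \ I) = volume (S ∩ I) + volume (I \ S) := by
      rw [hsplit1, ← hvolI, ← hsplit2, Set.inter_comm]
    exact (ENNReal.add_right_inj hinter).mp this
  -- integrability
  have hcont : Continuous fun s : ℝ => Real.exp (-(a*s)) := by continuity
  have hintT : IntegrableOn (fun s : ℝ => Real.exp (-(a*s))) (Set.Icc 0 T) :=
    hcont.integrableOn_Icc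
  have hintm : IntegrableOn (fun s : ℝ => Real.exp (-(a*s))) I := hcont.integrableOn_Icc
  have hintS : IntegrableOn (fun s : ℝ => Real.exp (-(a*s))) S := hintT.mono_set hsub
  -- split integrals
  have e1 : ∫ s in S, Real.exp (-(a*s)) =
      (∫ s in S ∩ I, Real.exp (-(a*s))) + ∫ s in S \ I, Real.exp (-(a*s))  := by
    rw [MeasureTheory.integral_inter_add_diff hImeas hintS]
  have e2 : ∫ s in I, Real.exp (-(a*s)) =
      (∫ s in I ∩ S, Real.exp (-(a*s))) + ∫ s in I \ S, Real.exp (-(a*s))  := by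
    rw [MeasureTheory.integral_inter_add_diff hS hintm]
  -- bounds on the difference pieces
  have hb1 : ∫ s in S \ I, Real.exp (-(a*s)) ≤ (volume (S \ I)).toReal * Real.exp (-(a*m)) := by
    have := setIntegral_mono_on (g := fun _ => Real.exp (-(a*m))) (hintS.mono_set Set.diff_subset)
      ((integrableOn_const_iff enorm_ne_top).mpr (Or.inr (lt_of_le_of_lt (measure_mono (Set.diff_subset.trans hsub))
        (by simp [Real.volume_Icc]))))
      (hS.diff hImeas) (fun x hx => ?_)
    · simpa [setIntegral_const, measureReal_def] using this
    · have hx0 : 0 ≤ x := (hsub hx.1).1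
      have : m < x := by
        by_contra h
        exact hx.2 ⟨hx0, not_lt.mp h⟩
      exact Real.exp_le_exp.mpr (by nlinarith)
  have hb2 : (volume (I \ S)).toReal * Real.exp (-(a*m)) ≤ ∫ s in I \ S, Real.exp (-(a*s)) := by
    have := setIntegral_mono_on (f := fun _ => Real.exp (-(a*m)))
      ((integrableOn_const_iff enorm_ne_top).mpr (Or.inr (lt_of_le_of_lt (measure_mono (Set.diff_subset : I \ S ⊆ I))
        (by simp [hI, Real.volume_Icc]))))
      (hintm.mono_set Set.diff_subset)
      (hImeas.diff hS) (fun x hx => ?_)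
    · simpa [setIntegral_const, measureReal_def] using this
    · exact Real.exp_le_exp.mpr (by nlinarith [hx.1.2, ha.le])
  have hIint : ∫ s in I, Real.exp (-(a*s)) = (1 - Real.exp (-(a*m)))/a := expInt a ha m hm0
  rw [e1, ← hIint, e2, Set.inter_comm S I]
  have : (volume (S \ I)).toReal = (volume (I \ S)).toReal := by rw [hdiffeq]
  linarith [hb1, hb2, this ▸ hb1]

lemma sign_eq (ξ b : ℝ) (hξ : ξ ≠ 0) (hb : b ≠ 0) :
    ξ = -(|ξ| / |b| * (b * if 0 < ξ * b then (-1:ℝ) else 1)) := by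
  have hb' : (0:ℝ) < |b| := abs_pos.mpr hb
  rcases lt_trichotomy (ξ * b) 0 with h | h | h
  · rw [if_neg (by linarith)]
    rcases abs_cases ξ with ⟨h1, h2⟩ | ⟨h1, h2⟩ <;>
      rcases abs_cases b with ⟨h3, h4⟩ | ⟨h3, h4⟩ <;> rw [h1, h3] <;> field_simp <;> nlinarith
  · exact absurd h (mul_ne_zero hξ hb)
  · rw [if_pos h]
    rcases abs_cases ξ with ⟨h1, h2⟩ | ⟨h1, h2⟩ <;>
      rcases abs_cases b with ⟨h3, h4⟩ | ⟨h3, h4⟩ <;> rw [h1, h3] <;> field_simp <;> nlinarith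

/-- Example, value function: for `ξ ∈ [−x₁, x₁]`,
`V₀(ξ) = −(1/a) log (1 − a |ξ| / |b|)`. -/
theorem V0_formula (T a b : ℝ) (hT : 0 < T) (ha : 0 < a) (hb : b ≠ 0) :
    ∀ ξ ∈ Set.Icc (-((1 - Real.exp (-(a * T))) * |b| / a))
        ((1 - Real.exp (-(a * T))) * |b| / a),
      V0 a b T ξ = -(1 / a) * Real.log (1 - a * |ξ| / |b|) := by
  intro ξ hξ
  have hb' : (0:ℝ) < |b| := abs_pos.mpr hb
  have hxi : |ξ| ≤ (1 - Real.exp (-(a * T))) * |b| / a := abs_le.mpr ⟨hξ.1, hξ.2⟩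
  set r : ℝ := 1 - a * |ξ| / |b| with hrdef
  have hrT : Real.exp (-(a*T)) ≤ r := by
    rw [hrdef]
    rw [le_div_iff₀ ha] at hxi
    have h2 : a * |ξ| / |b| ≤ 1 - Real.exp (-(a*T)) := by
      rw [div_le_iff₀ hb']
      nlinarith
    linarith
  have hrpos : (0:ℝ) < r := lt_of_lt_of_le (Real.exp_pos _) hrT
  have hr1 : r ≤ 1 := by
    have : 0 ≤ a * |ξ| / |b| := by positivity
    rw [hrdef]; linarith
  set τ : ℝ := -(1 / a) * Real.log r with hτdef
  have hlog : Real.log r ≤ 0 := Real.log_nonpos hrpos.le hr1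
  have hτ0 : 0 ≤ τ := by
    rw [hτdef]
    have : 0 < 1/a := by positivity
    nlinarith
  have hexpτ : Real.exp (-(a*τ)) = r := by
    have h1 : -(a*τ) = Real.log r := by
      rw [hτdef]; field_simp
    rw [h1, Real.exp_log hrpos]
  have hτT : τ ≤ T := by
    have h1 : -(a*T) ≤ Real.log r := by
      have := Real.log_le_log (Real.exp_pos _) hrT
      rwa [Real.log_exp] at this
    rw [hτdef]
    have h2 : 0 < 1/a := by positivity
    have h3 : a * τ = -Real.log r := by rw [hτdef]; field_simp
    nlinarith
  have hkey : (1 - Real.exp (-(a*τ)))/a = |ξ|/|b| := by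
    rw [hexpτ, hrdef]
    field_simp
    ring
  -- Lower bound
  have lb : ∀ v ∈ Adm a b T ξ, τ ≤ L0norm T v := by
    rintro v ⟨⟨hmeas, hbd⟩, hξv⟩
    set S : Set ℝ := {t ∈ Set.Icc (0:ℝ) T | v t ≠ 0} with hSdef
    have hSmeas : MeasurableSet S := by
      have : S = Set.Icc (0:ℝ) T ∩ v ⁻¹' ({0}ᶜ) := by
        ext t; simp [hSdef]
      rw [this]
      exact measurableSet_Icc.inter (hmeas (measurableSet_singleton 0).compl)
    have hsub : S ⊆ Set.Icc 0 T := fun t ht => ht.1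
    have hcont : Continuous fun s : ℝ => Real.exp (-(a*s)) := by continuity
    -- integrability of the integrand
    have hfmeas : Measurable fun s => Real.exp (-(a * s)) * b * v s :=
      ((hcont.measurable).mul_const b).mul hmeas
    have hfint : IntegrableOn (fun s => Real.exp (-(a * s)) * b * v s) (Set.Icc (0:ℝ) T) := by
      refine Integrable.mono' (g := fun _ => |b|)
        ((integrableOn_const_iff enorm_ne_top).mpr (Or.inr (by simp [Real.volume_Icc])))
        hfmeas.aestronglyMeasurable ?_
      filter_upwards [hbd, ae_restrict_mem measurableSet_Icc] with s h1 h2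
      have he : Real.exp (-(a*s)) ≤ 1 := by
        rw [Real.exp_le_one_iff]
        nlinarith [h2.1]
      have he0 : (0:ℝ) < Real.exp (-(a*s)) := Real.exp_pos _
      calc ‖Real.exp (-(a * s)) * b * v s‖ = Real.exp (-(a*s)) * |b| * |v s| := by
            simp [abs_mul, abs_of_pos he0]
      _ ≤ 1 * |b| * 1 := by
            apply mul_le_mul (mul_le_mul he le_rfl (abs_nonneg b) zero_le_one) h1
              (abs_nonneg _) (by positivity)
      _ = |b| := by ring
    -- bound |steer|
    have hgint : Integrable (S.indicator fun s => Real.exp (-(a*s)) * |b|)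
        (volume.restrict (Set.Icc (0:ℝ) T)) :=
      ((hcont.mul continuous_const).integrableOn_Icc).indicator hSmeas
    have hbound : |steer a b T v| ≤ |b| * ∫ s in S, Real.exp (-(a*s)) := by
      have h1 : |steer a b T v| ≤ ∫ s in Set.Icc (0:ℝ) T, |Real.exp (-(a * s)) * b * v s| := by
        have := MeasureTheory.norm_integral_le_integral_norm
          (μ := volume.restrict (Set.Icc (0:ℝ) T)) (fun s => Real.exp (-(a * s)) * b * v s)
        simp only [Real.norm_eq_abs] at this
        simpa [steer] using this
      have h2 : ∫ s in Set.Icc (0:ℝ) T, |Real.exp (-(a * s)) * b * v s| ≤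
          ∫ s in Set.Icc (0:ℝ) T, (S.indicator fun s => Real.exp (-(a*s)) * |b|) s := by
        refine integral_mono_ae hfint.abs hgint ?_
        filter_upwards [hbd, ae_restrict_mem measurableSet_Icc] with s h1 h2
        by_cases hvs : v s = 0
        · simp [hvs]
          exact Set.indicator_nonneg (fun t _ => by positivity) s
        · have hsS : s ∈ S := ⟨h2, hvs⟩
          rw [Set.indicator_of_mem hsS]
          have he0 : (0:ℝ) < Real.exp (-(a*s)) := Real.exp_pos _
          calc |Real.exp (-(a * s)) * b * v s| = Real.exp (-(a*s)) * |b| * |v s| := by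
                simp [abs_mul, abs_of_pos he0]
          _ ≤ Real.exp (-(a*s)) * |b| * 1 := by
                apply mul_le_mul_of_nonneg_left h1 (by positivity)
          _ = Real.exp (-(a*s)) * |b| := by ring
      have h3 : ∫ s in Set.Icc (0:ℝ) T, (S.indicator fun s => Real.exp (-(a*s)) * |b|) s =
          |b| * ∫ s in S, Real.exp (-(a*s)) := by
        rw [MeasureTheory.setIntegral_indicator hSmeas,
          Set.inter_eq_self_of_subset_right hsub, MeasureTheory.integral_mul_const]
        ring
      linarith
    -- measure of support vs closure
    set L : ℝ := L0norm T v with hLdef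
    have hclos : (volume S).toReal ≤ L := by
      have hsubc : sparseSupp T v ⊆ Set.Icc 0 T :=
        (isClosed_Icc.closure_subset_iff).mpr hsub
      have hfin : volume (sparseSupp T v) ≠ ⊤ :=
        ne_top_of_le_ne_top (by simp [Real.volume_Icc]) (measure_mono hsubc)
      exact ENNReal.toReal_mono hfin (measure_mono subset_closure)
    have hL0 : 0 ≤ L := ENNReal.toReal_nonneg
    -- chain of inequalities
    have hbt := bathtub a T ha hT S hSmeas hsub
    have hxis : |ξ| = |steer a b T v| := by rw [hξv, abs_neg]
    have hmono : (1 - Real.exp (-(a * (volume S).toReal)))/a ≤ (1 - Real.exp (-(a*L)))/a := by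
      have : Real.exp (-(a*L)) ≤ Real.exp (-(a * (volume S).toReal)) :=
        Real.exp_le_exp.mpr (by nlinarith)
      exact (div_le_div_iff_of_pos_right ha).mpr (by linarith)
    have h4 : |ξ| ≤ |b| * ((1 - Real.exp (-(a*L)))/a) := by
      rw [hxis]
      exact hbound.trans (mul_le_mul_of_nonneg_left (hbt.trans hmono) (abs_nonneg b))
    have h4' : a * |ξ| ≤ |b| * (1 - Real.exp (-(a*L))) := by
      have := mul_le_mul_of_nonneg_left h4 ha.le
      calc a * |ξ| ≤ a * (|b| * ((1 - Real.exp (-(a*L)))/a)) := this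
      _ = |b| * (1 - Real.exp (-(a*L))) := by field_simp
    have h5 : Real.exp (-(a*L)) ≤ r := by
      have hdiv : a * |ξ| / |b| ≤ 1 - Real.exp (-(a*L)) := by
        rw [div_le_iff₀ hb']
        linarith [h4', mul_comm (1 - Real.exp (-(a*L))) |b|]
      rw [hrdef]; linarith
    have h6 : -(a*L) ≤ Real.log r := by
      have := Real.log_le_log (Real.exp_pos _) h5
      rwa [Real.log_exp] at this
    have h7 : Real.log r = -(a*τ) := by
      rw [← hexpτ, Real.log_exp]
    have h8 : a * τ ≤ a * L := by linarith
    exact le_of_mul_le_mul_left h8 ha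
  -- Membership
  have mem : τ ∈ L0norm T '' Adm a b T ξ := by
    by_cases hξ0 : ξ = 0
    · -- zero control
      refine ⟨fun _ => 0, ⟨⟨measurable_const, ae_of_all _ (fun t => by norm_num)⟩, ?_⟩, ?_⟩
      · simp [steer, hξ0]
      · have hr1' : r = 1 := by rw [hrdef, hξ0]; simp
        have hτz : τ = 0 := by rw [hτdef, hr1', Real.log_one]; ring
        have : sparseSupp T (fun _ => (0:ℝ)) = ∅ := by
          simp [sparseSupp]
        rw [L0norm, this, hτz]
        simp
    · -- bang-bang control on [0, τ]
      set c : ℝ := if 0 < ξ * b then -1 else 1 with hcdef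
      have hc1 : |c| = 1 := by rw [hcdef]; split <;> norm_num
      have hc0 : c ≠ 0 := by rw [hcdef]; split <;> norm_num
      set u : ℝ → ℝ := (Set.Icc (0:ℝ) τ).indicator (fun _ => c) with hudef
      have humeas : Measurable u := measurable_const.indicator measurableSet_Icc
      have hubd : ∀ t, |u t| ≤ 1 := by
        intro t
        rw [hudef, Set.indicator_apply]
        split
        · rw [hc1]
        · norm_num
      have hsteer : steer a b T u = |ξ| / |b| * (b * c) := by
        have hint : ∀ s, Real.exp (-(a * s)) * b * u s =
            (Set.Icc (0:ℝ) τ).indicator (fun s => Real.exp (-(a * s)) * (b * c)) s := by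
          intro s
          rw [hudef, Set.indicator_apply, Set.indicator_apply]
          split <;> ring
        rw [steer]
        simp_rw [hint]
        rw [MeasureTheory.setIntegral_indicator measurableSet_Icc,
          Set.inter_eq_self_of_subset_right (Set.Icc_subset_Icc le_rfl hτT),
          MeasureTheory.integral_mul_const, expInt a ha τ hτ0, hkey]
      have hadm : u ∈ Adm a b T ξ := by
        refine ⟨⟨humeas, ae_of_all _ hubd⟩, ?_⟩
        rw [hsteer, hcdef]
        exact sign_eq ξ b hξ0 hb
      refine ⟨u, hadm, ?_⟩
      have hset : {t ∈ Set.Icc (0:ℝ) T | u t ≠ 0} = Set.Icc (0:ℝ) τ := by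
        ext t
        simp only [Set.mem_setOf_eq, hudef, Set.indicator_apply]
        constructor
        · rintro ⟨ht, hne⟩
          by_contra h
          rw [if_neg h] at hne
          exact hne rfl
        · intro ht
          exact ⟨Set.Icc_subset_Icc le_rfl hτT ht, by rw [if_pos ht]; exact hc0⟩
      rw [L0norm, sparseSupp, hset, isClosed_Icc.closure_eq, Real.volume_Icc,
        ENNReal.toReal_ofReal (by linarith)]
      simp
  show sInf (L0norm T '' Adm a b T ξ) = τ
  refine le_antisymm (csInf_le ⟨τ, ?_⟩ mem) (le_csInf ⟨τ, mem⟩ ?_)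
  · rintro x ⟨v, hv, rfl⟩
    exact lb v hv
  · rintro x ⟨v, hv, rfl⟩
    exact lb v hv

end
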